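/- arXiv:2102.08966 — 4 statements merged into one kernel-verified Lean document; each statement's English description precedes it below -/
import Mathlib

section
/- Let p be a two-input two-output no-signaling box with p(0,1|1,1) = p(1,0|1,1) = 0 (perfectly correlated outcomes on inputs x=y=1), and suppose all four conditioning marginals Σ_b p(a,b|0,1) for a ∈ {0,1} and Σ_a p(a,b|1,0) for b ∈ {0,1} are positive. Let q_A, q_B ∈ [0,1] be such that p(a,1|0,1) = q_A·Σ_b p(a,b|0,1) for both a = 0,1 and p(1,b|1,0) = q_B·Σ_a p(a,b|1,0) for both b = 0,1 (i.e., α₀ = β₀ = {0,1}). Then q_A = q_B. -/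
open Kronecker ComplexOrder

/-- A (bipartite) box: nonnegative entries, normalized for every input pair. -/
def IsBox {nA nB nX nY : ℕ} (p : Fin nA → Fin nB → Fin nX → Fin nY → ℝ) : Prop :=
  (∀ a b x y, 0 ≤ p a b x y) ∧ (∀ x y, (∑ a, ∑ b, p a b x y) = 1)

/-- No-signaling: each party's marginal does not depend on the other's input. -/
def NoSignaling {nA nB nX nY : ℕ} (p : Fin nA → Fin nB → Fin nX → Fin nY → ℝ) : Prop :=
  (∀ b y x x', (∑ a, p a b x y) = ∑ a, p a b x' y) ∧
  (∀ a x y y', (∑ b, p a b x y) = ∑ b, p a b x y')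

/-- Local (classical) box: a convex mixture of product deterministic/stochastic strategies. -/
def IsLocal {nA nB nX nY : ℕ} (p : Fin nA → Fin nB → Fin nX → Fin nY → ℝ) : Prop :=
  ∃ (Λ : ℕ) (w : Fin Λ → ℝ) (pA : Fin nA → Fin nX → Fin Λ → ℝ)
    (pB : Fin nB → Fin nY → Fin Λ → ℝ),
    (∀ l, 0 ≤ w l) ∧ ((∑ l, w l) = 1) ∧
    (∀ a x l, 0 ≤ pA a x l) ∧ (∀ x l, (∑ a, pA a x l) = 1) ∧
    (∀ b y l, 0 ≤ pB b y l) ∧ (∀ y l, (∑ b, pB b y l) = 1) ∧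
    (∀ a b x y, p a b x y = ∑ l, w l * pA a x l * pB b y l)

/-- Quantum box: realized by POVMs on a bipartite quantum state. -/
def IsQuantum {nA nB nX nY : ℕ} (p : Fin nA → Fin nB → Fin nX → Fin nY → ℝ) : Prop :=
  ∃ (dA dB : ℕ) (_ : 0 < dA) (_ : 0 < dB)
    (ρ : Matrix (Fin dA × Fin dB) (Fin dA × Fin dB) ℂ)
    (E : Fin nX → Fin nA → Matrix (Fin dA) (Fin dA) ℂ)
    (F : Fin nY → Fin nB → Matrix (Fin dB) (Fin dB) ℂ),
    ρ.PosSemidef ∧ ρ.trace = 1 ∧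
    (∀ x a, (E x a).PosSemidef) ∧ (∀ x, (∑ a, E x a) = 1) ∧
    (∀ y b, (F y b).PosSemidef) ∧ (∀ y, (∑ b, F y b) = 1) ∧
    (∀ a b x y, ((E x a ⊗ₖ F y b) * ρ).trace = (p a b x y : ℂ))

open Classical in
/-- The certainty hierarchy `(α_n, β_n)` of the agreement framework:
`α₀` are Alice's outputs (on input `x = 0`) from which she assigns conditional
probability `qA` to Bob outputting `1` on input `y = 1`; `β₀` is the analogue
for Bob; and at each later stage each party is moreover certain (on inputs
`x = y = 0`) that the other's output lies in the previous stage's set. -/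
noncomputable def alphaBeta {nA nB nX nY : ℕ} [NeZero nA] [NeZero nB] [NeZero nX] [NeZero nY]
    (p : Fin nA → Fin nB → Fin nX → Fin nY → ℝ) (qA qB : ℝ) :
    ℕ → Set (Fin nA) × Set (Fin nB)
  | 0 =>
      ({a | 0 < (∑ b, p a b 0 1) ∧ p a 1 0 1 = qA * (∑ b, p a b 0 1)},
       {b | 0 < (∑ a, p a b 1 0) ∧ p 1 b 1 0 = qB * (∑ a, p a b 1 0)})
  | n + 1 =>
      ({a | a ∈ (alphaBeta p qA qB n).1 ∧ 0 < (∑ b, p a b 0 0) ∧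
            (∑ b, if b ∈ (alphaBeta p qA qB n).2 then p a b 0 0 else 0) = ∑ b, p a b 0 0},
       {b | b ∈ (alphaBeta p qA qB n).2 ∧ 0 < (∑ a, p a b 0 0) ∧
            (∑ a, if a ∈ (alphaBeta p qA qB n).1 then p a b 0 0 else 0) = ∑ a, p a b 0 0})

open Fin.NatCast in
/-- The box gives rise to common certainty of disagreement: for some `qA ≠ qB` in `[0,1]`,
the outputs on inputs `x = y = 1` are perfectly correlated, the event
`(a,b,x,y) = (0,0,0,0)` has positive probability, and `0 ∈ α_n`, `0 ∈ β_n` for every `n`. -/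
def CommonCertaintyOfDisagreement {nA nB nX nY : ℕ}
    [NeZero nA] [NeZero nB] [NeZero nX] [NeZero nY]
    (p : Fin nA → Fin nB → Fin nX → Fin nY → ℝ) : Prop :=
  ∃ qA qB : ℝ, qA ∈ Set.Icc (0:ℝ) 1 ∧ qB ∈ Set.Icc (0:ℝ) 1 ∧ qA ≠ qB ∧
    (∀ a b, (a : ℕ) ≠ (b : ℕ) → p a b 1 1 = 0) ∧ 0 < p 0 0 0 0 ∧
    (∀ n : ℕ, (0 : Fin nA) ∈ (alphaBeta p qA qB n).1 ∧ (0 : Fin nB) ∈ (alphaBeta p qA qB n).2)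

open Fin.NatCast in
/-- The box gives rise to singular disagreement: perfectly correlated outputs on inputs
`x = y = 1`, positive probability of `(0,0,0,0)`, Alice assigns conditional probability
`qA = 1` to `b = 1` given `a = 0, x = 0, y = 1`, and Bob assigns conditional probability
`qB = 0` to `a = 1` given `b = 0, x = 1, y = 0`. -/
def SingularDisagreement {nA nB nX nY : ℕ}
    [NeZero nA] [NeZero nB] [NeZero nX] [NeZero nY]
    (p : Fin nA → Fin nB → Fin nX → Fin nY → ℝ) : Prop :=
  (∀ a b, (a : ℕ) ≠ (b : ℕ) → p a b 1 1 = 0) ∧ 0 < p 0 0 0 0 ∧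
  (0 < ∑ b, p 0 b 0 1) ∧ (p 0 1 0 1 = ∑ b, p 0 b 0 1) ∧
  (0 < ∑ a, p a 0 1 0) ∧ (p 1 0 1 0 = 0)


/-- Case 3 of the proof of Theorem 3 of the paper: if every outcome of Alice leads her to
assign probability `qA`, and every outcome of Bob leads him to assign probability `qB`
(i.e. `α₀ = β₀ = {0,1}`), then perfect correlation at inputs `x = y = 1` forces `qA = qB`. -/
theorem full_alpha_beta_implies_agreement
    (p : Fin 2 → Fin 2 → Fin 2 → Fin 2 → ℝ)
    (hbox : IsBox p) (hns : NoSignaling p)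
    (hpc1 : p 0 1 1 1 = 0) (hpc2 : p 1 0 1 1 = 0)
    (hmA : ∀ a, 0 < ∑ b, p a b 0 1) (hmB : ∀ b, 0 < ∑ a, p a b 1 0)
    (qA qB : ℝ) (hqA : qA ∈ Set.Icc (0:ℝ) 1) (hqB : qB ∈ Set.Icc (0:ℝ) 1)
    (hA : ∀ a, p a 1 0 1 = qA * (∑ b, p a b 0 1))
    (hB : ∀ b, p 1 b 1 0 = qB * (∑ a, p a b 1 0)) :
    qA = qB := by
  obtain ⟨hpos, hnorm⟩ := hbox
  have h1 := hA 0; have h2 := hA 1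
  have h3 := hB 0; have h4 := hB 1
  have hn1 := hnorm 0 1
  have hn2 := hnorm 1 0
  have hns1 := hns.1 1 1 0 1
  have hns2 := hns.2 1 1 0 1
  simp [Fin.sum_univ_two] at h1 h2 h3 h4 hn1 hn2 hns1 hns2
  have e1 : p 0 1 0 1 + p 1 1 0 1 = qA := by linear_combination h1 + h2 + qA * hn1
  have e2 : p 1 0 1 0 + p 1 1 1 0 = qB := by linear_combination h3 + h4 + qB * hn2
  linarith [e1, e2, hns1, hns2, hpc1, hpc2]
end

section
/- No two-input two-output quantum box gives rise to common certainty of disagreement. That is, if p is a two-input two-output box that is quantum, then p does not give rise to common certainty of disagreement. -/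
open Kronecker ComplexOrder

open Matrix

lemma my_trace_ct_self {n : Type*} [Fintype n] (A : Matrix n n ℂ)
    (h : (Aᴴ * A).trace = 0) : A = 0 := by
  have h2 : ∑ j, ∑ i, Complex.normSq (A i j) = 0 := by
    have := congrArg Complex.re h
    simpa [Matrix.trace, Matrix.diag, Matrix.mul_apply, Matrix.conjTranspose_apply,
      Complex.re_sum, Complex.mul_conj', Complex.normSq_eq_conj_mul_self, Complex.normSq_apply] using this
  ext i j
  have hj := (Finset.sum_eq_zero_iff_of_nonneg (fun j _ => Finset.sum_nonneg
    (fun i _ => Complex.normSq_nonneg _))).mp h2 j (Finset.mem_univ j)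
  have hi := (Finset.sum_eq_zero_iff_of_nonneg (fun i _ => Complex.normSq_nonneg _)).mp hj i
    (Finset.mem_univ i)
  simpa using Complex.normSq_eq_zero.mp hi

open scoped MatrixOrder in
lemma my_psd_sqrt {n : Type*} [Fintype n] [DecidableEq n]
    {X : Matrix n n ℂ} (hX : X.PosSemidef) : ∃ S : Matrix n n ℂ, Sᴴ = S ∧ S * S = X := by
  obtain ⟨S, hS, -, hSS⟩ := CFC.exists_sqrt_of_isSelfAdjoint_of_quasispectrumRestricts
    hX.isHermitian (QuasispectrumRestricts.nnreal_of_nonneg hX.nonneg)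
  exact ⟨S, hS, hSS⟩

lemma my_psd_mul_trace_zero {n : Type*} [Fintype n] [DecidableEq n]
    {X ρ : Matrix n n ℂ} (hX : X.PosSemidef) (hρ : ρ.PosSemidef)
    (h : (X * ρ).trace = 0) : X * ρ = 0 := by
  obtain ⟨S, hSh', hSS'⟩ := my_psd_sqrt hX
  obtain ⟨R, hRh', hRR'⟩ := my_psd_sqrt hρ
  have hSS : S * S = X := hSS'
  have hRR : R * R = ρ := hRR'
  have hSh : Sᴴ = S := hSh'
  have hRh : Rᴴ = R := hRh'
  have hN : S * R = 0 := by
    apply my_trace_ct_self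
    have : (S * R)ᴴ * (S * R) = R * (S * S) * R := by
      rw [Matrix.conjTranspose_mul, hSh, hRh]; noncomm_ring
    rw [this, hSS]
    calc (R * X * R).trace = (X * (R * R)).trace := by
          rw [Matrix.mul_assoc, Matrix.trace_mul_comm, Matrix.mul_assoc]
      _ = 0 := by rw [hRR, h]
  calc X * ρ = S * (S * R) * R := by rw [← hSS, ← hRR]; noncomm_ring
    _ = 0 := by rw [hN]; simp

lemma my_kron_ct {m n : Type*} [Fintype m] [Fintype n] (A : Matrix m m ℂ) (B : Matrix n n ℂ) :
    (A ⊗ₖ B)ᴴ = Aᴴ ⊗ₖ Bᴴ := by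
  ext ⟨i1, i2⟩ ⟨j1, j2⟩
  simp [Matrix.conjTranspose_apply]

lemma my_kron_psd {m n : Type*} [Fintype m] [Fintype n] [DecidableEq m] [DecidableEq n]
    {A : Matrix m m ℂ} {B : Matrix n n ℂ} (hA : A.PosSemidef) (hB : B.PosSemidef) :
    (A ⊗ₖ B).PosSemidef := by
  obtain ⟨SA, hSAh, hSA⟩ := my_psd_sqrt hA
  obtain ⟨SB, hSBh, hSB⟩ := my_psd_sqrt hB
  have h : A ⊗ₖ B = (SA ⊗ₖ SB)ᴴ * (SA ⊗ₖ SB) := by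
    rw [my_kron_ct, hSAh, hSBh, ← Matrix.mul_kronecker_mul,
      hSA, hSB]
  rw [h]
  exact Matrix.posSemidef_conjTranspose_mul_self _


/-- Theorem 4 of the paper: no two-input two-output quantum box gives rise to
common certainty of disagreement. -/
theorem quantum_2x2_no_ccd
    (p : Fin 2 → Fin 2 → Fin 2 → Fin 2 → ℝ)
    (hbox : IsBox p) (hq : IsQuantum p) :
    ¬ CommonCertaintyOfDisagreement p := by
  classical
  rintro ⟨qA, qB, hqA, hqB, hne, hcorr, hpos, hmem⟩
  obtain ⟨hnn, hnorm⟩ := hbox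
  obtain ⟨dA, dB, hdA, hdB, ρ, E, F, hρ, hρtr, hE, hE1, hF, hF1, hp⟩ := hq
  set A : Set (Fin 2) := ⋂ n, (alphaBeta p qA qB n).1 with hAdef
  set B : Set (Fin 2) := ⋂ n, (alphaBeta p qA qB n).2 with hBdef
  have hA0 : (0:Fin 2) ∈ A := Set.mem_iInter.mpr (fun n => (hmem n).1)
  have hB0 : (0:Fin 2) ∈ B := Set.mem_iInter.mpr (fun n => (hmem n).2)
  have hAsub : ∀ a ∈ A, 0 < (∑ b, p a b 0 1) ∧ p a 1 0 1 = qA * ∑ b, p a b 0 1 := by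
    intro a ha
    have := Set.mem_iInter.mp ha 0
    simpa [alphaBeta] using this
  have hBsub : ∀ b ∈ B, 0 < (∑ a, p a b 1 0) ∧ p 1 b 1 0 = qB * ∑ a, p a b 1 0 := by
    intro b hb
    have := Set.mem_iInter.mp hb 0
    simpa [alphaBeta] using this
  -- zero entries at inputs (0,0)
  have hzAB : ∀ a ∈ A, ∀ b, b ∉ B → p a b 0 0 = 0 := by
    intro a ha b hb
    obtain ⟨n, hbn⟩ : ∃ n, b ∉ (alphaBeta p qA qB n).2 := by
      by_contra hc; push_neg at hc; exact hb (Set.mem_iInter.mpr hc)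
    have ha' := Set.mem_iInter.mp ha (n+1)
    simp only [alphaBeta, Set.mem_setOf_eq] at ha'
    obtain ⟨-, -, hsum⟩ := ha'
    have hz : ∑ b', (p a b' 0 0 - if b' ∈ (alphaBeta p qA qB n).2 then p a b' 0 0 else 0) = 0 := by
      rw [Finset.sum_sub_distrib, hsum, sub_self]
    have hterm := (Finset.sum_eq_zero_iff_of_nonneg (fun b' _ => by
      by_cases h : b' ∈ (alphaBeta p qA qB n).2 <;> simp [h, hnn])).mp hz b (Finset.mem_univ b)
    simpa [hbn] using hterm
  have hzBA : ∀ b ∈ B, ∀ a, a ∉ A → p a b 0 0 = 0 := by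
    intro b hb a ha
    obtain ⟨n, han⟩ : ∃ n, a ∉ (alphaBeta p qA qB n).1 := by
      by_contra hc; push_neg at hc; exact ha (Set.mem_iInter.mpr hc)
    have hb' := Set.mem_iInter.mp hb (n+1)
    simp only [alphaBeta, Set.mem_setOf_eq] at hb'
    obtain ⟨-, -, hsum⟩ := hb'
    have hz : ∑ a', (p a' b 0 0 - if a' ∈ (alphaBeta p qA qB n).1 then p a' b 0 0 else 0) = 0 := by
      rw [Finset.sum_sub_distrib, hsum, sub_self]
    have hterm := (Finset.sum_eq_zero_iff_of_nonneg (fun a' _ => by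
      by_cases h : a' ∈ (alphaBeta p qA qB n).1 <;> simp [h, hnn])).mp hz a (Finset.mem_univ a)
    simpa [han] using hterm
  -- kernel lemma specialized
  have hker : ∀ (X : Matrix (Fin dA) (Fin dA) ℂ) (Y : Matrix (Fin dB) (Fin dB) ℂ),
      X.PosSemidef → Y.PosSemidef → ((X ⊗ₖ Y) * ρ).trace = 0 → (X ⊗ₖ Y) * ρ = 0 :=
    fun X Y hX hY h => my_psd_mul_trace_zero (my_kron_psd hX hY) hρ h
  have hc01 : p 0 1 1 1 = 0 := by simpa using hcorr 0 1 (by norm_num)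
  have hc10 : p 1 0 1 1 = 0 := by simpa using hcorr 1 0 (by norm_num)
  have hz3 : (E 1 0 ⊗ₖ F 1 1) * ρ = 0 := by
    refine hker _ _ (hE 1 0) (hF 1 1) ?_
    rw [hp 0 1 1 1, hc01]; norm_num
  have hz4 : (E 1 1 ⊗ₖ F 1 0) * ρ = 0 := by
    refine hker _ _ (hE 1 1) (hF 1 0) ?_
    rw [hp 1 0 1 1, hc10]; norm_num
  -- masked POVM elements
  set gA : Fin 2 → Matrix (Fin dA) (Fin dA) ℂ := fun a => if a ∈ A then E 0 a else 0 with hgA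
  set gA' : Fin 2 → Matrix (Fin dA) (Fin dA) ℂ := fun a => if a ∈ A then 0 else E 0 a with hgA'
  set fB : Fin 2 → Matrix (Fin dB) (Fin dB) ℂ := fun b => if b ∈ B then F 0 b else 0 with hfB
  set fB' : Fin 2 → Matrix (Fin dB) (Fin dB) ℂ := fun b => if b ∈ B then 0 else F 0 b with hfB'
  set G : Matrix (Fin dA) (Fin dA) ℂ := gA 0 + gA 1 with hG
  set H : Matrix (Fin dB) (Fin dB) ℂ := fB 0 + fB 1 with hH
  have hGsum : G + (gA' 0 + gA' 1) = 1 := by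
    have h1 : ∀ a, gA a + gA' a = E 0 a := by
      intro a; by_cases h : a ∈ A <;> simp [hgA, hgA', h]
    have := hE1 0
    rw [Fin.sum_univ_two] at this
    rw [hG, ← this, ← h1 0, ← h1 1]; abel
  have hHsum : H + (fB' 0 + fB' 1) = 1 := by
    have h1 : ∀ b, fB b + fB' b = F 0 b := by
      intro b; by_cases h : b ∈ B <;> simp [hfB, hfB', h]
    have := hF1 0
    rw [Fin.sum_univ_two] at this
    rw [hH, ← this, ← h1 0, ← h1 1]; abel
  have hE11 : E 1 0 + E 1 1 = 1 := by have := hE1 1; rwa [Fin.sum_univ_two] at this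
  have hF11 : F 1 0 + F 1 1 = 1 := by have := hF1 1; rwa [Fin.sum_univ_two] at this
  -- zero products
  have hzG : ∀ a b, (gA a ⊗ₖ fB' b) * ρ = 0 := by
    intro a b
    by_cases ha : a ∈ A
    · by_cases hb : b ∈ B
      · simp [hgA, hfB', ha, hb, Matrix.kronecker_zero]
      · simp only [hgA, hfB', if_pos ha, if_neg hb]
        refine hker _ _ (hE 0 a) (hF 0 b) ?_
        rw [hp a b 0 0, hzAB a ha b hb]; norm_num
    · simp [hgA, ha, Matrix.zero_kronecker]
  have hzG' : ∀ a b, (gA' a ⊗ₖ fB b) * ρ = 0 := by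
    intro a b
    by_cases hb : b ∈ B
    · by_cases ha : a ∈ A
      · simp [hgA', ha, Matrix.zero_kronecker]
      · simp only [hgA', hfB, if_neg ha, if_pos hb]
        refine hker _ _ (hE 0 a) (hF 0 b) ?_
        rw [hp a b 0 0, hzBA b hb a ha]; norm_num
    · simp [hfB, hb, Matrix.kronecker_zero]
  -- operator identity D1
  have hD1 : (G ⊗ₖ (1 : Matrix (Fin dB) (Fin dB) ℂ)) * ρ
      = ((1 : Matrix (Fin dA) (Fin dA) ℂ) ⊗ₖ H) * ρ := by
    have e1 : (G ⊗ₖ (1 : Matrix (Fin dB) (Fin dB) ℂ)) * ρ = (G ⊗ₖ H) * ρ := by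
      conv_lhs => rw [← hHsum]
      rw [Matrix.kronecker_add, add_mul]
      have : (G ⊗ₖ (fB' 0 + fB' 1)) * ρ = 0 := by
        rw [hG, Matrix.kronecker_add, Matrix.add_kronecker, Matrix.add_kronecker, add_mul,
          add_mul, add_mul, hzG, hzG, hzG, hzG]; simp
      rw [this, add_zero]
    have e2 : ((1 : Matrix (Fin dA) (Fin dA) ℂ) ⊗ₖ H) * ρ = (G ⊗ₖ H) * ρ := by
      conv_lhs => rw [← hGsum]
      rw [Matrix.add_kronecker, add_mul]
      have : ((gA' 0 + gA' 1) ⊗ₖ H) * ρ = 0 := by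
        rw [hH, Matrix.add_kronecker, Matrix.kronecker_add, Matrix.kronecker_add, add_mul,
          add_mul, add_mul, hzG', hzG', hzG', hzG']; simp
      rw [this, add_zero]
    rw [e1, e2]
  -- operator identity D2
  have hD2 : (E 1 1 ⊗ₖ (1 : Matrix (Fin dB) (Fin dB) ℂ)) * ρ
      = ((1 : Matrix (Fin dA) (Fin dA) ℂ) ⊗ₖ F 1 1) * ρ := by
    have e1 : (E 1 1 ⊗ₖ (1 : Matrix (Fin dB) (Fin dB) ℂ)) * ρ = (E 1 1 ⊗ₖ F 1 1) * ρ := by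
      conv_lhs => rw [← hF11]
      rw [Matrix.kronecker_add, add_mul, hz4, zero_add]
    have e2 : ((1 : Matrix (Fin dA) (Fin dA) ℂ) ⊗ₖ F 1 1) * ρ = (E 1 1 ⊗ₖ F 1 1) * ρ := by
      conv_lhs => rw [← hE11]
      rw [Matrix.add_kronecker, add_mul, hz3, zero_add]
    rw [e1, e2]
  -- traces
  set m : ℝ := (if (0:Fin 2) ∈ A then (∑ b, p 0 b 0 1) else 0)
    + (if (1:Fin 2) ∈ A then (∑ b, p 1 b 0 1) else 0) with hm
  set m' : ℝ := (if (0:Fin 2) ∈ B then (∑ a, p a 0 1 0) else 0)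
    + (if (1:Fin 2) ∈ B then (∑ a, p a 1 1 0) else 0) with hm'
  have htrA1 : ∀ a, ((gA a ⊗ₖ (1 : Matrix (Fin dB) (Fin dB) ℂ)) * ρ).trace
      = if a ∈ A then ((∑ b, p a b 0 1 : ℝ) : ℂ) else 0 := by
    intro a
    by_cases ha : a ∈ A
    · simp only [hgA, if_pos ha]
      rw [← hF11, Matrix.kronecker_add, add_mul, Matrix.trace_add, hp a 0 0 1, hp a 1 0 1,
        Fin.sum_univ_two]
      push_cast; ring
    · simp [hgA, ha, Matrix.zero_kronecker]
  have htrB1 : ∀ b, (((1 : Matrix (Fin dA) (Fin dA) ℂ) ⊗ₖ fB b) * ρ).trace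
      = if b ∈ B then ((∑ a, p a b 1 0 : ℝ) : ℂ) else 0 := by
    intro b
    by_cases hb : b ∈ B
    · simp only [hfB, if_pos hb]
      rw [← hE11, Matrix.add_kronecker, add_mul, Matrix.trace_add, hp 0 b 1 0, hp 1 b 1 0,
        Fin.sum_univ_two]
      push_cast; ring
    · simp [hfB, hb, Matrix.kronecker_zero]
  have hT1 : ((G ⊗ₖ (1 : Matrix (Fin dB) (Fin dB) ℂ)) * ρ).trace = (m : ℂ) := by
    rw [hG, Matrix.add_kronecker, add_mul, Matrix.trace_add, htrA1 0, htrA1 1, hm]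
    push_cast
    split_ifs <;> simp
  have hT2 : (((1 : Matrix (Fin dA) (Fin dA) ℂ) ⊗ₖ H) * ρ).trace = (m' : ℂ) := by
    rw [hH, Matrix.kronecker_add, add_mul, Matrix.trace_add, htrB1 0, htrB1 1, hm']
    push_cast
    split_ifs <;> simp
  have hmm : m = m' := by
    have : (m : ℂ) = (m' : ℂ) := by rw [← hT1, ← hT2, hD1]
    exact_mod_cast this
  have hT3 : ((G ⊗ₖ F 1 1) * ρ).trace = ((qA * m : ℝ) : ℂ) := by
    rw [hG, Matrix.add_kronecker, add_mul, Matrix.trace_add]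
    have t0 : ∀ a, ((gA a ⊗ₖ F 1 1) * ρ).trace = if a ∈ A then ((qA * ∑ b, p a b 0 1 : ℝ) : ℂ) else 0 := by
      intro a
      by_cases ha : a ∈ A
      · simp only [hgA, if_pos ha]
        rw [hp a 1 0 1, (hAsub a ha).2]
      · simp [hgA, ha, Matrix.zero_kronecker]
    rw [t0 0, t0 1, hm]
    push_cast
    split_ifs <;> simp <;> ring
  have hT4 : ((E 1 1 ⊗ₖ H) * ρ).trace = ((qB * m' : ℝ) : ℂ) := by
    rw [hH, Matrix.kronecker_add, add_mul, Matrix.trace_add]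
    have t0 : ∀ b, ((E 1 1 ⊗ₖ fB b) * ρ).trace = if b ∈ B then ((qB * ∑ a, p a b 1 0 : ℝ) : ℂ) else 0 := by
      intro b
      by_cases hb : b ∈ B
      · simp only [hfB, if_pos hb]
        rw [hp 1 b 1 0, (hBsub b hb).2]
      · simp [hfB, hb, Matrix.kronecker_zero]
    rw [t0 0, t0 1, hm']
    push_cast
    split_ifs <;> simp <;> ring
  -- chain identities
  have hC1 : (G ⊗ₖ F 1 1) * ρ = ((G * E 1 1) ⊗ₖ (1 : Matrix (Fin dB) (Fin dB) ℂ)) * ρ := by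
    have e : G ⊗ₖ F 1 1 = (G ⊗ₖ (1 : Matrix (Fin dB) (Fin dB) ℂ))
        * ((1 : Matrix (Fin dA) (Fin dA) ℂ) ⊗ₖ F 1 1) := by
      rw [← Matrix.mul_kronecker_mul, Matrix.mul_one, Matrix.one_mul]
    rw [e, Matrix.mul_assoc, ← hD2, ← Matrix.mul_assoc, ← Matrix.mul_kronecker_mul,
      Matrix.mul_one]
  have hC2 : (E 1 1 ⊗ₖ H) * ρ = ((E 1 1 * G) ⊗ₖ (1 : Matrix (Fin dB) (Fin dB) ℂ)) * ρ := by
    have e : E 1 1 ⊗ₖ H = (E 1 1 ⊗ₖ (1 : Matrix (Fin dB) (Fin dB) ℂ))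
        * ((1 : Matrix (Fin dA) (Fin dA) ℂ) ⊗ₖ H) := by
      rw [← Matrix.mul_kronecker_mul, Matrix.mul_one, Matrix.one_mul]
    rw [e, Matrix.mul_assoc, ← hD1, ← Matrix.mul_assoc, ← Matrix.mul_kronecker_mul,
      Matrix.mul_one]
  -- hermitian of G
  have hGherm : Gᴴ = G := by
    have : ∀ a, (gA a)ᴴ = gA a := by
      intro a; by_cases h : a ∈ A
      · simp only [hgA, if_pos h]; exact (hE 0 a).1
      · simp [hgA, h]
    rw [hG, Matrix.conjTranspose_add, this 0, this 1]
  -- star of trace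
  have hstar : star ((((G * E 1 1) ⊗ₖ (1 : Matrix (Fin dB) (Fin dB) ℂ)) * ρ).trace)
      = (((E 1 1 * G) ⊗ₖ (1 : Matrix (Fin dB) (Fin dB) ℂ)) * ρ).trace := by
    rw [← Matrix.trace_conjTranspose, Matrix.conjTranspose_mul, hρ.1, my_kron_ct,
      Matrix.conjTranspose_one, Matrix.conjTranspose_mul, (hE 1 1).1, hGherm,
      Matrix.trace_mul_comm]
  -- conclude
  have e1 : ((qA * m : ℝ) : ℂ) = (((G * E 1 1) ⊗ₖ (1 : Matrix (Fin dB) (Fin dB) ℂ)) * ρ).trace := by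
    rw [← hT3, hC1]
  have e2 : ((qB * m : ℝ) : ℂ) = (((E 1 1 * G) ⊗ₖ (1 : Matrix (Fin dB) (Fin dB) ℂ)) * ρ).trace := by
    rw [hmm, ← hT4, hC2]
  have e3 : ((qA * m : ℝ) : ℂ) = ((qB * m : ℝ) : ℂ) := by
    rw [e2, ← hstar, ← e1]
    simp [Complex.conj_ofReal]
  have e4 : qA * m = qB * m := by exact_mod_cast e3
  have hm0 : 0 < m := by
    rw [hm, if_pos hA0]
    have h1 : 0 < ∑ b, p 0 b 0 1 := (hAsub 0 hA0).1
    have h2 : (0:ℝ) ≤ if (1:Fin 2) ∈ A then (∑ b, p 1 b 0 1) else 0 := by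
      split_ifs
      · exact Finset.sum_nonneg (fun b _ => hnn 1 b 0 1)
      · exact le_refl 0
    linarith
  exact hne (mul_right_cancel₀ (ne_of_gt hm0) e4)
end

section
/- No quantum box gives rise to common certainty of disagreement. That is, for any n_A, n_B, n_X, n_Y ≥ 2, if p is a box with outputs in Fin n_A, Fin n_B and inputs in Fin n_X, Fin n_Y that is quantum, then p does not give rise to common certainty of disagreement. -/
open Kronecker ComplexOrder


section Aux
open Matrix


namespace QNoCCD

lemma trace_conjTranspose_mul_self_eq_zero {m n : Type*} [Fintype m] [Fintype n]
    {X : Matrix m n ℂ} (h : (Xᴴ * X).trace = 0) : X = 0 := by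
  have h2 : (∑ j, ∑ i, Complex.normSq (X i j) : ℝ) = 0 := by
    have : (Xᴴ * X).trace = ((∑ j, ∑ i, Complex.normSq (X i j) : ℝ) : ℂ) := by
      simp [Matrix.trace, Matrix.diag, Matrix.mul_apply, Matrix.conjTranspose_apply,
        Complex.normSq_eq_conj_mul_self]
    rw [this] at h
    exact_mod_cast h
  ext i j
  have hnn : ∀ j ∈ Finset.univ, (0:ℝ) ≤ ∑ i, Complex.normSq (X i j) :=
    fun j _ => Finset.sum_nonneg fun i _ => Complex.normSq_nonneg _
  have h3 := (Finset.sum_eq_zero_iff_of_nonneg hnn).mp h2 j (Finset.mem_univ j)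
  have h4 := (Finset.sum_eq_zero_iff_of_nonneg
    (fun i _ => Complex.normSq_nonneg (X i j))).mp h3 i (Finset.mem_univ i)
  simpa [Complex.normSq_eq_zero] using h4

lemma psd_mul_eq_zero_of_trace_eq_zero {n : Type*} [Fintype n] [DecidableEq n]
    {M ρ : Matrix n n ℂ} (hM : M.PosSemidef) (hρ : ρ.PosSemidef)
    (h : (M * ρ).trace = 0) : M * ρ = 0 := by
  obtain ⟨A, rfl⟩ : ∃ A : Matrix n n ℂ, M = Aᴴ * A := by
    open scoped MatrixOrder in exact CStarAlgebra.nonneg_iff_eq_star_mul_self.mp hM.nonneg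
  obtain ⟨B, rfl⟩ : ∃ B : Matrix n n ℂ, ρ = Bᴴ * B := by
    open scoped MatrixOrder in exact CStarAlgebra.nonneg_iff_eq_star_mul_self.mp hρ.nonneg
  have key : ((A * Bᴴ)ᴴ * (A * Bᴴ)).trace = 0 := by
    have : ((A * Bᴴ)ᴴ * (A * Bᴴ)) = B * (Aᴴ * A * Bᴴ) := by
      simp [Matrix.conjTranspose_mul, Matrix.mul_assoc]
    rw [this, Matrix.trace_mul_comm]
    rw [← h]
    congr 1
    simp [Matrix.mul_assoc]
  have hz : A * Bᴴ = 0 := trace_conjTranspose_mul_self_eq_zero key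
  calc Aᴴ * A * (Bᴴ * B) = Aᴴ * (A * Bᴴ) * B := by simp [Matrix.mul_assoc]
    _ = 0 := by rw [hz]; simp

lemma kron_conjTranspose {m n m' n' : Type*} (A : Matrix m n ℂ) (B : Matrix m' n' ℂ) :
    (A ⊗ₖ B)ᴴ = Aᴴ ⊗ₖ Bᴴ := by
  ext ⟨i, j⟩ ⟨k, l⟩
  simp [Matrix.conjTranspose_apply, Matrix.kroneckerMap_apply, mul_comm]

lemma kron_posSemidef {m n : Type*} [Fintype m] [Fintype n] [DecidableEq m] [DecidableEq n]
    {A : Matrix m m ℂ} {B : Matrix n n ℂ} (hA : A.PosSemidef) (hB : B.PosSemidef) :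
    (A ⊗ₖ B).PosSemidef := by
  obtain ⟨A', rfl⟩ : ∃ A' : Matrix m m ℂ, A = A'ᴴ * A' := by
    open scoped MatrixOrder in exact CStarAlgebra.nonneg_iff_eq_star_mul_self.mp hA.nonneg
  obtain ⟨B', rfl⟩ : ∃ B' : Matrix n n ℂ, B = B'ᴴ * B' := by
    open scoped MatrixOrder in exact CStarAlgebra.nonneg_iff_eq_star_mul_self.mp hB.nonneg
  rw [Matrix.mul_kronecker_mul, ← kron_conjTranspose]
  exact Matrix.posSemidef_conjTranspose_mul_self _

lemma sum_kronecker {ι m n m' n' : Type*} (s : Finset ι) (f : ι → Matrix m n ℂ)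
    (B : Matrix m' n' ℂ) : (∑ i ∈ s, f i) ⊗ₖ B = ∑ i ∈ s, f i ⊗ₖ B := by
  ext ⟨i, j⟩ ⟨k, l⟩
  simp [Matrix.kroneckerMap_apply, Matrix.sum_apply, Finset.sum_mul]

lemma kronecker_sum {ι m n m' n' : Type*} (s : Finset ι) (A : Matrix m n ℂ)
    (f : ι → Matrix m' n' ℂ) : A ⊗ₖ (∑ i ∈ s, f i) = ∑ i ∈ s, A ⊗ₖ f i := by
  ext ⟨i, j⟩ ⟨k, l⟩
  simp [Matrix.kroneckerMap_apply, Matrix.sum_apply, Finset.mul_sum]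

lemma antitone_nat_exists_eq (g : ℕ → ℕ) (hg : ∀ n, g (n + 1) ≤ g n) :
    ∃ N, g (N + 1) = g N := by
  by_contra h
  push_neg at h
  have hlt : ∀ n, g (n + 1) < g n := fun n => lt_of_le_of_ne (hg n) (h n)
  have key : ∀ n, g n + n ≤ g 0 := by
    intro n
    induction n with
    | zero => simp
    | succ k ih => have := hlt k; omega
  have := key (g 0 + 1)
  omega

end QNoCCD
end Aux

/-- Theorem 5 of the paper: no quantum box (with any finite numbers of inputs and outputs)
gives rise to common certainty of disagreement. -/
theorem quantum_no_ccd
    {nA nB nX nY : ℕ} [NeZero nA] [NeZero nB] [NeZero nX] [NeZero nY]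
    (hA : 2 ≤ nA) (hB : 2 ≤ nB) (hX : 2 ≤ nX) (hY : 2 ≤ nY)
    (p : Fin nA → Fin nB → Fin nX → Fin nY → ℝ)
    (hbox : IsBox p) (hq : IsQuantum p) :
    ¬ CommonCertaintyOfDisagreement p := by
  classical
  rintro ⟨qA, qB, hqAmem, hqBmem, hqAB, hpc, hpos, hmem⟩
  obtain ⟨dA, dB, hdA, hdB, ρ, E, F, hρ, hρtr, hE, hEsum, hF, hFsum, htr⟩ := hq
  obtain ⟨hnn, hnorm⟩ := hbox
  have h1A : ((1 : Fin nA) : ℕ) = 1 := by rw [Fin.val_one']; exact Nat.mod_eq_of_lt hA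
  have h1B : ((1 : Fin nB) : ℕ) = 1 := by rw [Fin.val_one']; exact Nat.mod_eq_of_lt hB
  -- zero probabilities kill the corresponding operator on the state
  have hkill : ∀ (x : Fin nX) (y : Fin nY) (a : Fin nA) (b : Fin nB),
      p a b x y = 0 → (E x a ⊗ₖ F y b) * ρ = 0 := by
    intro x y a b hp
    refine QNoCCD.psd_mul_eq_zero_of_trace_eq_zero
      (QNoCCD.kron_posSemidef (hE x a) (hF y b)) hρ ?_
    rw [htr a b x y, hp]; norm_num
  -- the hierarchy is decreasing
  have hAsub : ∀ n, (alphaBeta p qA qB (n+1)).1 ⊆ (alphaBeta p qA qB n).1 := by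
    intro n a ha
    simp only [alphaBeta, Set.mem_setOf_eq] at ha
    exact ha.1
  have hBsub : ∀ n, (alphaBeta p qA qB (n+1)).2 ⊆ (alphaBeta p qA qB n).2 := by
    intro n b hb
    simp only [alphaBeta, Set.mem_setOf_eq] at hb
    exact hb.1
  have hsub0A : ∀ n, (alphaBeta p qA qB n).1 ⊆ (alphaBeta p qA qB 0).1 := by
    intro n
    induction n with
    | zero => exact subset_rfl
    | succ k ih => exact fun a ha => ih (hAsub k ha)
  have hsub0B : ∀ n, (alphaBeta p qA qB n).2 ⊆ (alphaBeta p qA qB 0).2 := by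
    intro n
    induction n with
    | zero => exact subset_rfl
    | succ k ih => exact fun b hb => ih (hBsub k hb)
  -- stabilization of the hierarchy
  set As : ℕ → Finset (Fin nA) :=
    fun n => Finset.univ.filter (fun a => a ∈ (alphaBeta p qA qB n).1) with hAs
  set Bs : ℕ → Finset (Fin nB) :=
    fun n => Finset.univ.filter (fun b => b ∈ (alphaBeta p qA qB n).2) with hBs
  have hAsSub : ∀ n, As (n+1) ⊆ As n := by
    intro n a ha
    simp only [hAs, Finset.mem_filter, Finset.mem_univ, true_and] at ha ⊢
    exact hAsub n ha
  have hBsSub : ∀ n, Bs (n+1) ⊆ Bs n := by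
    intro n b hb
    simp only [hBs, Finset.mem_filter, Finset.mem_univ, true_and] at hb ⊢
    exact hBsub n hb
  obtain ⟨N, hN⟩ := QNoCCD.antitone_nat_exists_eq
    (fun n => (As n).card + (Bs n).card)
    (fun n => add_le_add (Finset.card_le_card (hAsSub n)) (Finset.card_le_card (hBsSub n)))
  have hAcard : (As N).card ≤ (As (N+1)).card := by
    have h1 := Finset.card_le_card (hAsSub N)
    have h2 := Finset.card_le_card (hBsSub N)
    omega
  have hBcard : (Bs N).card ≤ (Bs (N+1)).card := by
    have h1 := Finset.card_le_card (hAsSub N)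
    have h2 := Finset.card_le_card (hBsSub N)
    omega
  have hAeq : As (N+1) = As N := Finset.eq_of_subset_of_card_le (hAsSub N) hAcard
  have hBeq : Bs (N+1) = Bs N := Finset.eq_of_subset_of_card_le (hBsSub N) hBcard
  have hbackA : ∀ a, a ∈ (alphaBeta p qA qB N).1 → a ∈ (alphaBeta p qA qB (N+1)).1 := by
    intro a ha
    have h1 : a ∈ As N := by
      simp only [hAs, Finset.mem_filter, Finset.mem_univ, true_and]; exact ha
    rw [← hAeq] at h1
    simpa only [hAs, Finset.mem_filter, Finset.mem_univ, true_and] using h1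
  have hbackB : ∀ b, b ∈ (alphaBeta p qA qB N).2 → b ∈ (alphaBeta p qA qB (N+1)).2 := by
    intro b hb
    have h1 : b ∈ Bs N := by
      simp only [hBs, Finset.mem_filter, Finset.mem_univ, true_and]; exact hb
    rw [← hBeq] at h1
    simpa only [hBs, Finset.mem_filter, Finset.mem_univ, true_and] using h1
  -- the stabilized events
  set A : Set (Fin nA) := (alphaBeta p qA qB N).1 with hAdef
  set B : Set (Fin nB) := (alphaBeta p qA qB N).2 with hBdef
  have hA0 : (0 : Fin nA) ∈ A := (hmem N).1
  have hB0 : (0 : Fin nB) ∈ B := (hmem N).2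
  have hAfix : ∀ a ∈ A, (∑ b, if b ∈ B then p a b 0 0 else 0) = ∑ b, p a b 0 0 := by
    intro a ha
    have h2 := hbackA a ha
    simp only [alphaBeta, Set.mem_setOf_eq] at h2
    exact h2.2.2
  have hBfix : ∀ b ∈ B, (∑ a, if a ∈ A then p a b 0 0 else 0) = ∑ a, p a b 0 0 := by
    intro b hb
    have h2 := hbackB b hb
    simp only [alphaBeta, Set.mem_setOf_eq] at h2
    exact h2.2.2
  have hAq : ∀ a ∈ A, 0 < (∑ b, p a b 0 1) ∧ p a 1 0 1 = qA * (∑ b, p a b 0 1) := by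
    intro a ha
    have := hsub0A N ha
    simpa only [alphaBeta, Set.mem_setOf_eq] using this
  have hBq : ∀ b ∈ B, 0 < (∑ a, p a b 1 0) ∧ p 1 b 1 0 = qB * (∑ a, p a b 1 0) := by
    intro b hb
    have := hsub0B N hb
    simpa only [alphaBeta, Set.mem_setOf_eq] using this
  -- zero probability outside the rectangle A × B on inputs (0,0)
  have hz1 : ∀ a ∈ A, ∀ b, b ∉ B → p a b 0 0 = 0 := by
    intro a ha b hb
    have hfix := hAfix a ha
    have hsplit : (∑ b, if b ∈ B then (0:ℝ) else p a b 0 0) = 0 := by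
      have hdec : (∑ b, p a b 0 0)
          = (∑ b, if b ∈ B then p a b 0 0 else 0)
            + (∑ b, if b ∈ B then (0:ℝ) else p a b 0 0) := by
        rw [← Finset.sum_add_distrib]
        refine Finset.sum_congr rfl fun b _ => ?_
        split <;> simp
      linarith
    have := (Finset.sum_eq_zero_iff_of_nonneg
      (fun b _ => by split
                     · exact le_refl 0
                     · exact hnn a b 0 0)).mp hsplit b (Finset.mem_univ b)
    simpa [hb] using this
  have hz2 : ∀ b ∈ B, ∀ a, a ∉ A → p a b 0 0 = 0 := by
    intro b hb a ha
    have hfix := hBfix b hb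
    have hsplit : (∑ a, if a ∈ A then (0:ℝ) else p a b 0 0) = 0 := by
      have hdec : (∑ a, p a b 0 0)
          = (∑ a, if a ∈ A then p a b 0 0 else 0)
            + (∑ a, if a ∈ A then (0:ℝ) else p a b 0 0) := by
        rw [← Finset.sum_add_distrib]
        refine Finset.sum_congr rfl fun a _ => ?_
        split <;> simp
      linarith
    have := (Finset.sum_eq_zero_iff_of_nonneg
      (fun a _ => by split
                     · exact le_refl 0
                     · exact hnn a b 0 0)).mp hsplit a (Finset.mem_univ a)
    simpa [ha] using this
  -- the event operators
  set PA : Matrix (Fin dA) (Fin dA) ℂ := ∑ a, if a ∈ A then E 0 a else 0 with hPA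
  set QB : Matrix (Fin dB) (Fin dB) ℂ := ∑ b, if b ∈ B then F 0 b else 0 with hQB
  -- perfect correlation: operator identity
  have hcorr : ∀ (a : Fin nA) (b : Fin nB), (a : ℕ) ≠ (b : ℕ) → (E 1 a ⊗ₖ F 1 b) * ρ = 0 := by
    intro a b h
    have hp := hpc (a : ℕ) (b : ℕ) h
    rw [Fin.cast_val_eq_self, Fin.cast_val_eq_self] at hp
    exact hkill 1 1 a b hp
  have fact2 : (E 1 1 ⊗ₖ (1 : Matrix (Fin dB) (Fin dB) ℂ)) * ρ
      = ((1 : Matrix (Fin dA) (Fin dA) ℂ) ⊗ₖ F 1 1) * ρ := by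
    have hL : (E 1 1 ⊗ₖ (1 : Matrix (Fin dB) (Fin dB) ℂ)) * ρ = (E 1 1 ⊗ₖ F 1 1) * ρ := by
      conv_lhs => rw [← hFsum 1]
      rw [QNoCCD.kronecker_sum, Finset.sum_mul]
      rw [Finset.sum_eq_single (1 : Fin nB)]
      · intro b _ hb
        refine hcorr 1 b ?_
        rw [h1A]
        intro hc
        exact hb (Fin.ext (by rw [← hc, h1B]))
      · intro h; exact absurd (Finset.mem_univ _) h
    have hR : ((1 : Matrix (Fin dA) (Fin dA) ℂ) ⊗ₖ F 1 1) * ρ = (E 1 1 ⊗ₖ F 1 1) * ρ := by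
      conv_lhs => rw [← hEsum 1]
      rw [QNoCCD.sum_kronecker, Finset.sum_mul]
      rw [Finset.sum_eq_single (1 : Fin nA)]
      · intro a _ ha
        refine hcorr a 1 ?_
        rw [h1B]
        intro hc
        exact ha (Fin.ext (by rw [hc, h1A]))
      · intro h; exact absurd (Finset.mem_univ _) h
    rw [hL, hR]
  have fact2' : ρ * (E 1 1 ⊗ₖ (1 : Matrix (Fin dB) (Fin dB) ℂ))
      = ρ * ((1 : Matrix (Fin dA) (Fin dA) ℂ) ⊗ₖ F 1 1) := by
    have h := congrArg Matrix.conjTranspose fact2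
    simpa only [Matrix.conjTranspose_mul, QNoCCD.kron_conjTranspose, hρ.1.eq,
      (hE 1 1).1.eq, (hF 1 1).1.eq, Matrix.conjTranspose_one] using h
  -- certainty: operator identity
  have fact3 : (PA ⊗ₖ (1 : Matrix (Fin dB) (Fin dB) ℂ)) * ρ
      = ((1 : Matrix (Fin dA) (Fin dA) ℂ) ⊗ₖ QB) * ρ := by
    have hLa : (PA ⊗ₖ (1 : Matrix (Fin dB) (Fin dB) ℂ)) * ρ
        = ∑ a, ∑ b, (if a ∈ A ∧ b ∈ B then (E 0 a ⊗ₖ F 0 b) * ρ else 0) := by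
      rw [hPA, QNoCCD.sum_kronecker, Finset.sum_mul]
      refine Finset.sum_congr rfl fun a _ => ?_
      by_cases haA : a ∈ A
      · simp only [if_pos haA]
        conv_lhs => rw [← hFsum 0]
        rw [QNoCCD.kronecker_sum, Finset.sum_mul]
        refine Finset.sum_congr rfl fun b _ => ?_
        by_cases hbB : b ∈ B
        · simp [haA, hbB]
        · rw [hkill 0 0 a b (hz1 a haA b hbB)]
          simp [haA, hbB]
      · simp [haA]
    have hRa : ((1 : Matrix (Fin dA) (Fin dA) ℂ) ⊗ₖ QB) * ρ
        = ∑ a, ∑ b, (if a ∈ A ∧ b ∈ B then (E 0 a ⊗ₖ F 0 b) * ρ else 0) := by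
      rw [hQB, QNoCCD.kronecker_sum, Finset.sum_mul, Finset.sum_comm]
      refine Finset.sum_congr rfl fun b _ => ?_
      by_cases hbB : b ∈ B
      · simp only [if_pos hbB]
        conv_lhs => rw [← hEsum 0]
        rw [QNoCCD.sum_kronecker, Finset.sum_mul]
        refine Finset.sum_congr rfl fun a _ => ?_
        by_cases haA : a ∈ A
        · simp [haA, hbB]
        · rw [hkill 0 0 a b (hz2 b hbB a haA)]
          simp [haA, hbB]
      · simp [hbB]
    rw [hLa, hRa]
  -- trace helpers
  have hPAF : ∀ (y : Fin nY) (b : Fin nB),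
      ((PA ⊗ₖ F y b) * ρ).trace = ∑ a, (if a ∈ A then (p a b 0 y : ℂ) else 0) := by
    intro y b
    rw [hPA, QNoCCD.sum_kronecker, Finset.sum_mul, Matrix.trace_sum]
    refine Finset.sum_congr rfl fun a _ => ?_
    by_cases haA : a ∈ A
    · simp only [if_pos haA]; rw [htr]
    · simp [haA]
  have hEQ : ∀ (x : Fin nX) (a : Fin nA),
      ((E x a ⊗ₖ QB) * ρ).trace = ∑ b, (if b ∈ B then (p a b x 0 : ℂ) else 0) := by
    intro x a
    rw [hQB, QNoCCD.kronecker_sum, Finset.sum_mul, Matrix.trace_sum]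
    refine Finset.sum_congr rfl fun b _ => ?_
    by_cases hbB : b ∈ B
    · simp only [if_pos hbB]; rw [htr]
    · simp [hbB]
  -- the trace of the rectangle event, two ways
  set tR : ℝ := ∑ a, (if a ∈ A then (∑ b, p a b 0 1) else 0) with htRdef
  have htC : ((PA ⊗ₖ (1 : Matrix (Fin dB) (Fin dB) ℂ)) * ρ).trace = (tR : ℂ) := by
    conv_lhs => rw [← hFsum 1]
    rw [QNoCCD.kronecker_sum, Finset.sum_mul, Matrix.trace_sum]
    have : ∀ b : Fin nB, ((PA ⊗ₖ F 1 b) * ρ).trace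
        = ∑ a, (if a ∈ A then (p a b 0 1 : ℂ) else 0) := fun b => hPAF 1 b
    rw [Finset.sum_congr rfl fun b _ => this b, Finset.sum_comm, htRdef]
    push_cast
    refine Finset.sum_congr rfl fun a _ => ?_
    by_cases haA : a ∈ A <;> simp [haA]
  set sR : ℝ := ∑ b, (if b ∈ B then (∑ a, p a b 1 0) else 0) with hsRdef
  have hsC : (((1 : Matrix (Fin dA) (Fin dA) ℂ) ⊗ₖ QB) * ρ).trace = (sR : ℂ) := by
    conv_lhs => rw [← hEsum 1]
    rw [QNoCCD.sum_kronecker, Finset.sum_mul, Matrix.trace_sum]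
    have : ∀ a : Fin nA, ((E 1 a ⊗ₖ QB) * ρ).trace
        = ∑ b, (if b ∈ B then (p a b 1 0 : ℂ) else 0) := fun a => hEQ 1 a
    rw [Finset.sum_congr rfl fun a _ => this a, Finset.sum_comm, hsRdef]
    push_cast
    refine Finset.sum_congr rfl fun b _ => ?_
    by_cases hbB : b ∈ B <;> simp [hbB]
  have hts : (tR : ℂ) = (sR : ℂ) := by
    rw [← htC, ← hsC, fact3]
  -- qA and qB equations
  have hqAeq : ((PA ⊗ₖ F 1 1) * ρ).trace = (qA : ℂ) * (tR : ℂ) := by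
    rw [hPAF 1 1, htRdef]
    push_cast
    rw [Finset.mul_sum]
    refine Finset.sum_congr rfl fun a _ => ?_
    by_cases haA : a ∈ A
    · simp only [if_pos haA]
      rw [(hAq a haA).2]
      push_cast
      ring
    · simp [haA]
  have hqBeq : ((E 1 1 ⊗ₖ QB) * ρ).trace = (qB : ℂ) * (sR : ℂ) := by
    rw [hEQ 1 1, hsRdef]
    push_cast
    rw [Finset.mul_sum]
    refine Finset.sum_congr rfl fun b _ => ?_
    by_cases hbB : b ∈ B
    · simp only [if_pos hbB]
      rw [(hBq b hbB).2]
      push_cast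
      ring
    · simp [hbB]
  -- the key chain of equalities
  have e1 : (PA ⊗ₖ F 1 1) * ρ
      = ((1 : Matrix (Fin dA) (Fin dA) ℂ) ⊗ₖ F 1 1) * ((PA ⊗ₖ (1 : Matrix (Fin dB) (Fin dB) ℂ)) * ρ) := by
    rw [← Matrix.mul_assoc, ← Matrix.mul_kronecker_mul, Matrix.one_mul, Matrix.mul_one]
  have e2 : (E 1 1 ⊗ₖ QB) * ρ
      = (E 1 1 ⊗ₖ (1 : Matrix (Fin dB) (Fin dB) ℂ)) * (((1 : Matrix (Fin dA) (Fin dA) ℂ) ⊗ₖ QB) * ρ) := by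
    rw [← Matrix.mul_assoc, ← Matrix.mul_kronecker_mul, Matrix.one_mul, Matrix.mul_one]
  have hchainA : ((PA ⊗ₖ F 1 1) * ρ).trace
      = (((1 : Matrix (Fin dA) (Fin dA) ℂ) ⊗ₖ F 1 1)
          * (((1 : Matrix (Fin dA) (Fin dA) ℂ) ⊗ₖ QB) * ρ)).trace := by
    rw [e1, fact3]
  have hchainB : ((E 1 1 ⊗ₖ QB) * ρ).trace
      = (((1 : Matrix (Fin dA) (Fin dA) ℂ) ⊗ₖ F 1 1)
          * (((1 : Matrix (Fin dA) (Fin dA) ℂ) ⊗ₖ QB) * ρ)).trace := by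
    rw [e2, Matrix.trace_mul_comm, Matrix.mul_assoc, fact2', ← Matrix.mul_assoc,
      Matrix.trace_mul_comm]
  -- conclusion
  have hfin : (qA : ℂ) * (tR : ℂ) = (qB : ℂ) * (tR : ℂ) := by
    rw [← hqAeq, hchainA, ← hchainB, hqBeq, ← hts]
  have htRpos : 0 < tR := by
    rw [htRdef]
    refine Finset.sum_pos' (fun a _ => ?_) ⟨0, Finset.mem_univ _, ?_⟩
    · by_cases haA : a ∈ A
      · simp only [if_pos haA]
        exact Finset.sum_nonneg fun b _ => hnn a b 0 1
      · simp [haA]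
    · simp only [if_pos hA0]
      exact (hAq 0 hA0).1
  have htRne : (tR : ℂ) ≠ 0 := by
    exact_mod_cast ne_of_gt htRpos
  have : (qA : ℂ) = (qB : ℂ) := mul_right_cancel₀ htRne hfin
  exact hqAB (by exact_mod_cast this)
end

section
/- No local two-input two-output box gives rise to singular disagreement. Equivalently, there is no local two-input two-output box p with p(0,0|0,0) > 0, p(0,0|0,1) = 0, p(1,0|1,0) = 0 and p(0,1|1,1) = 0 (a form of Hardy's paradox). -/
open Kronecker ComplexOrder

/-- Theorem 6 of the paper: no local two-input two-output box gives rise to singular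
disagreement; equivalently, no local box realizes the associated Hardy paradox
`p(0,0|0,0) > 0`, `p(0,0|0,1) = 0`, `p(1,0|1,0) = 0`, `p(0,1|1,1) = 0`. -/
theorem local_no_singular_disagreement :
    (∀ p : Fin 2 → Fin 2 → Fin 2 → Fin 2 → ℝ,
      IsBox p → IsLocal p → ¬ SingularDisagreement p) ∧
    (∀ p : Fin 2 → Fin 2 → Fin 2 → Fin 2 → ℝ,
      IsBox p → IsLocal p →
        ¬ (0 < p 0 0 0 0 ∧ p 0 0 0 1 = 0 ∧ p 1 0 1 0 = 0 ∧ p 0 1 1 1 = 0)) := by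
  have key : ∀ p : Fin 2 → Fin 2 → Fin 2 → Fin 2 → ℝ,
      IsBox p → IsLocal p →
        ¬ (0 < p 0 0 0 0 ∧ p 0 0 0 1 = 0 ∧ p 1 0 1 0 = 0 ∧ p 0 1 1 1 = 0) := by
    rintro p hbox ⟨Λ, w, pA, pB, hw, hwsum, hA, hAsum, hB, hBsum, hp⟩ ⟨hpos, h1, h2, h3⟩
    rw [hp] at hpos h1 h2 h3
    -- find a strictly positive term in p(0,0|0,0)
    obtain ⟨l, -, hl⟩ : ∃ l ∈ Finset.univ, (0:ℝ) < w l * pA 0 0 l * pB 0 0 l := by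
      apply Finset.exists_lt_of_sum_lt
      simpa using hpos
    have hwl : 0 < w l := lt_of_le_of_ne (hw l) (by rintro h; simp [← h] at hl)
    have hAl : 0 < pA 0 0 l := lt_of_le_of_ne (hA 0 0 l) (by rintro h; simp [← h] at hl)
    have hBl : 0 < pB 0 0 l := lt_of_le_of_ne (hB 0 0 l) (by rintro h; simp [← h] at hl)
    have term_nonneg : ∀ (a b x y : Fin 2) (i : Fin Λ),
        0 ≤ w i * pA a x i * pB b y i := fun a b x y i =>
      mul_nonneg (mul_nonneg (hw i) (hA a x i)) (hB b y i)
    -- from p(0,0|0,1) = 0 : pB 0 1 l = 0, hence pB 1 1 l = 1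
    have t1 : w l * pA 0 0 l * pB 0 1 l = 0 :=
      (Finset.sum_eq_zero_iff_of_nonneg (fun i _ => term_nonneg 0 0 0 1 i)).mp h1 l
        (Finset.mem_univ l)
    have hB01 : pB 0 1 l = 0 := by
      rcases mul_eq_zero.mp t1 with h | h
      · rcases mul_eq_zero.mp h with h | h <;> exact absurd h (by positivity)
      · exact h
    have hB11 : pB 1 1 l = 1 := by
      have := hBsum 1 l
      rw [Fin.sum_univ_two] at this
      linarith
    -- from p(1,0|1,0) = 0 : pA 1 1 l = 0, hence pA 0 1 l = 1
    have t2 : w l * pA 1 1 l * pB 0 0 l = 0 :=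
      (Finset.sum_eq_zero_iff_of_nonneg (fun i _ => term_nonneg 1 0 1 0 i)).mp h2 l
        (Finset.mem_univ l)
    have hA11 : pA 1 1 l = 0 := by
      rcases mul_eq_zero.mp t2 with h | h
      · rcases mul_eq_zero.mp h with h | h
        · exact absurd h (by positivity)
        · exact h
      · exact absurd h (by positivity)
    have hA01 : pA 0 1 l = 1 := by
      have := hAsum 1 l
      rw [Fin.sum_univ_two] at this
      linarith
    -- from p(0,1|1,1) = 0 : contradiction
    have t3 : w l * pA 0 1 l * pB 1 1 l = 0 :=
      (Finset.sum_eq_zero_iff_of_nonneg (fun i _ => term_nonneg 0 1 1 1 i)).mp h3 l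
        (Finset.mem_univ l)
    rw [hA01, hB11, mul_one, mul_one] at t3
    linarith
  refine ⟨?_, key⟩
  rintro p hbox hloc ⟨hcorr, hpos, hsumpos, heq, hsumpos', hzero⟩
  have h001 : p 0 0 0 1 = 0 := by
    rw [Fin.sum_univ_two] at heq
    linarith
  have h011 : p 0 1 1 1 = 0 := hcorr 0 1 (by simp)
  exact key p hbox hloc ⟨hpos, h001, hzero, h011⟩
end
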